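/- Let E^(1), ..., E^(T) be full-rank n×d real matrices with n < d, and e^(1), ..., e^(T) vectors in R^d whose Kruskal rank is at least n (every subset of at most n of them is linearly independent). For any m ≤ n−1, there exists a rank-one matrix W ∈ R^{d×d} such that E^(t) W e^(t) = 0 for all 1 ≤ t ≤ m, and for all m < t ≤ T the vector E^(t) W e^(t) has pairwise distinct entries. -/

import Mathlib

open Matrix

/-- A finite family of linear functionals, each not identically zero, has a common
non-vanishing point (over `ℝ`, an infinite field). -/
lemma aux_exists_forall_ne_zero {M : Type*} [AddCommGroup M] [Module ℝ M]
    {ι : Type*} [DecidableEq ι] (s : Finset ι) (φ : ι → M →ₗ[ℝ] ℝ)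
    (h : ∀ i ∈ s, ∃ x, φ i x ≠ 0) : ∃ x : M, ∀ i ∈ s, φ i x ≠ 0 := by
  classical
  induction s using Finset.induction_on with
  | empty => exact ⟨0, by simp⟩
  | @insert a s ha ih =>
    obtain ⟨x, hx⟩ := ih (fun i hi => h i (Finset.mem_insert_of_mem hi))
    obtain ⟨y, hy⟩ := h a (Finset.mem_insert_self a s)
    obtain ⟨c, hc⟩ := Infinite.exists_notMem_finset
      ((insert a s).image (fun i => -(φ i x) / (φ i y)))
    refine ⟨x + c • y, ?_⟩
    intro i hi
    have hkey : φ i x ≠ 0 ∨ φ i y ≠ 0 := by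
      rcases Finset.mem_insert.mp hi with rfl | hi'
      · exact Or.inr hy
      · exact Or.inl (hx i hi')
    have hval : φ i (x + c • y) = φ i x + c * φ i y := by
      simp [map_add, LinearMap.map_smul, smul_eq_mul]
    rw [hval]
    intro h0
    by_cases hzy : φ i y = 0
    · rw [hzy, mul_zero, add_zero] at h0
      rcases hkey with h1 | h1
      · exact h1 h0
      · exact h1 hzy
    · have hceq : c = -(φ i x) / (φ i y) := by
        field_simp
        linarith [h0]
      exact hc (Finset.mem_image.mpr ⟨i, hi, hceq.symm⟩)

/-- The dot product with a fixed vector, as a linear functional. -/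
def dotL {d : ℕ} (w : Fin d → ℝ) : (Fin d → ℝ) →ₗ[ℝ] ℝ where
  toFun x := x ⬝ᵥ w
  map_add' a b := add_dotProduct a b w
  map_smul' c a := smul_dotProduct c a w

lemma dual_eq_dot {d : ℕ} (f : Module.Dual ℝ (Fin d → ℝ)) (y : Fin d → ℝ) :
    f y = y ⬝ᵥ (fun i => f (fun j => if i = j then 1 else 0)) := by
  rw [LinearMap.pi_apply_eq_sum_univ f y]
  simp [dotProduct, smul_eq_mul]

lemma vecMulVec_mulVec_eq {d : ℕ} (u v x : Fin d → ℝ) :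
    Matrix.vecMulVec u v *ᵥ x = (v ⬝ᵥ x) • u := by
  funext i
  simp [Matrix.mulVec, Matrix.vecMulVec, dotProduct, Finset.mul_sum, mul_assoc,
    mul_comm, mul_left_comm]

lemma rank_vecMulVec_eq_one {d : ℕ} {u v : Fin d → ℝ} (hu : u ≠ 0) (hv : v ≠ 0) :
    (Matrix.vecMulVec u v).rank = 1 := by
  have hrange : LinearMap.range (Matrix.vecMulVec u v).mulVecLin = Submodule.span ℝ {u} := by
    apply le_antisymm
    · rintro w ⟨x, rfl⟩
      rw [Matrix.mulVecLin_apply, vecMulVec_mulVec_eq]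
      exact Submodule.smul_mem _ _ (Submodule.mem_span_singleton_self u)
    · rw [Submodule.span_le, Set.singleton_subset_iff]
      have hvv : v ⬝ᵥ v ≠ 0 := by
        intro h
        exact hv (dotProduct_self_eq_zero.mp h)
      refine ⟨(v ⬝ᵥ v)⁻¹ • v, ?_⟩
      rw [Matrix.mulVecLin_apply, vecMulVec_mulVec_eq, dotProduct_smul,
        smul_eq_mul, inv_mul_cancel₀ hvv, one_smul]
  rw [Matrix.rank, hrange]
  exact finrank_span_singleton hu

theorem exists_rank_one_null_and_distinct
    (n d T m : ℕ) (hnd : n < d) (hm : m ≤ n - 1)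
    (E : Fin T → Matrix (Fin n) (Fin d) ℝ)
    (hE : ∀ t, (E t).rank = n)
    (e : Fin T → (Fin d → ℝ))
    (hKruskal : ∀ s : Finset (Fin T), s.card ≤ n →
      LinearIndependent ℝ (fun x : s => e x)) :
    ∃ W : Matrix (Fin d) (Fin d) ℝ, W.rank = 1 ∧
      (∀ t : Fin T, (t : ℕ) < m → (E t) *ᵥ (W *ᵥ e t) = 0) ∧
      (∀ t : Fin T, m ≤ (t : ℕ) → ∀ i j : Fin n, i ≠ j →
        ((E t) *ᵥ (W *ᵥ e t)) i ≠ ((E t) *ᵥ (W *ᵥ e t)) j) := by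
  classical
  have hd0 : 0 < d := lt_of_le_of_lt (Nat.zero_le n) hnd
  by_cases hn2 : n < 2
  · -- trivial case : no distinctness constraints, m = 0
    have hm0 : m = 0 := by omega
    have hne : (Pi.single (⟨0, hd0⟩ : Fin d) (1:ℝ) : Fin d → ℝ) ≠ 0 := by
      intro h
      simpa using congrFun h ⟨0, hd0⟩
    refine ⟨Matrix.vecMulVec (Pi.single ⟨0, hd0⟩ 1) (Pi.single ⟨0, hd0⟩ 1),
      rank_vecMulVec_eq_one hne hne, ?_, ?_⟩
    · intro t ht; omega
    · intro t ht i j hij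
      exact absurd (Fin.ext (by omega)) hij
  -- main case : n ≥ 2
  push_neg at hn2
  have hm1n : m + 1 ≤ n := by omega
  -- surjectivity of the maps E t
  have hsurj : ∀ t, Function.Surjective (E t).mulVecLin := by
    intro t
    rw [← LinearMap.range_eq_top]
    apply Submodule.eq_top_of_finrank_eq
    rw [show Module.finrank ℝ (LinearMap.range (E t).mulVecLin) = (E t).rank from rfl, hE t,
      Module.finrank_fintype_fun_eq_card, Fintype.card_fin]
  -- construction of u
  have hudiffs : ∀ p : Fin T × Fin n × Fin n, p.2.1 ≠ p.2.2 →
      ∃ x, ((E p.1) *ᵥ x) p.2.1 - ((E p.1) *ᵥ x) p.2.2 ≠ 0 := by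
    rintro ⟨t, i, j⟩ hij
    obtain ⟨x, hx⟩ := hsurj t (Pi.single i 1)
    refine ⟨x, ?_⟩
    have hx' : (E t) *ᵥ x = Pi.single i 1 := hx
    rw [hx']
    simp [Pi.single_apply, hij, (Ne.symm hij)]
  set φu : Option (Fin T × Fin n × Fin n) → (Fin d → ℝ) →ₗ[ℝ] ℝ := fun o =>
    match o with
    | none => LinearMap.proj (⟨0, hd0⟩ : Fin d)
    | some p => ((LinearMap.proj p.2.1 : (Fin n → ℝ) →ₗ[ℝ] ℝ) - (LinearMap.proj p.2.2 : (Fin n → ℝ) →ₗ[ℝ] ℝ)).comp (E p.1).mulVecLin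
    with hφu
  set su : Finset (Option (Fin T × Fin n × Fin n)) :=
    insert none ((Finset.univ.filter
      (fun p : Fin T × Fin n × Fin n => m ≤ (p.1 : ℕ) ∧ p.2.1 ≠ p.2.2)).image some) with hsu
  obtain ⟨u, hu⟩ := aux_exists_forall_ne_zero su φu (by
    intro i hi
    rcases Finset.mem_insert.mp hi with rfl | hi'
    · exact ⟨Pi.single ⟨0, hd0⟩ 1, by simp [hφu]⟩
    · obtain ⟨p, hp, rfl⟩ := Finset.mem_image.mp hi'
      obtain ⟨hp1, hp2⟩ := Finset.mem_filter.mp hp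
      obtain ⟨x, hx⟩ := hudiffs p hp2.2
      exact ⟨x, by simpa [hφu] using hx⟩)
  have hu0 : u ≠ 0 := by
    intro h
    apply hu none (Finset.mem_insert_self _ _)
    simp [hφu, h]
  have hudiff : ∀ t : Fin T, m ≤ (t : ℕ) → ∀ i j : Fin n, i ≠ j →
      ((E t) *ᵥ u) i ≠ ((E t) *ᵥ u) j := by
    intro t ht i j hij
    have hmem : some (t, i, j) ∈ su := by
      apply Finset.mem_insert_of_mem
      exact Finset.mem_image.mpr ⟨(t, i, j), Finset.mem_filter.mpr ⟨Finset.mem_univ _, ht, hij⟩, rfl⟩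
    have := hu _ hmem
    simp only [hφu, LinearMap.comp_apply, LinearMap.sub_apply, LinearMap.proj_apply,
      Matrix.mulVecLin_apply] at this
    intro h
    exact this (by rw [h]; ring)
  -- construction of v
  set Tm : Finset (Fin T) := Finset.univ.filter (fun t' : Fin T => (t' : ℕ) < m) with hTm
  have hTmcard : Tm.card ≤ m := by
    have : Tm.card ≤ (Finset.range m).card := by
      apply Finset.card_le_card_of_injOn (fun t' : Fin T => (t' : ℕ))
      · intro t' ht'
        simp only [hTm, Finset.mem_coe, Finset.mem_filter] at ht'
        exact Finset.mem_range.mpr ht'.2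
      · intro a _ b _ hab
        exact Fin.ext hab
    simpa using this
  set S : Submodule ℝ (Fin d → ℝ) := Submodule.span ℝ (↑(Tm.image e)) with hS
  have hSfinrank : Module.finrank ℝ S ≤ m := by
    refine le_trans ?_ (le_trans (Finset.card_image_le (s := Tm) (f := e)) hTmcard)
    exact finrank_span_finset_le_card (Tm.image e)
  -- every vector not in S admits a vector in K := (span)ᶜ-dual with nonzero dot product
  have key : ∀ w : Fin d → ℝ, w ∉ S →
      ∃ x : Fin d → ℝ, (∀ t' ∈ Tm, x ⬝ᵥ e t' = 0) ∧ x ⬝ᵥ w ≠ 0 := by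
    intro w hw
    obtain ⟨f, hf1, hf2⟩ := Submodule.exists_dual_map_eq_bot_of_notMem hw inferInstance
    set x : Fin d → ℝ := fun i => f (fun j => if i = j then 1 else 0) with hx
    have hfx : ∀ y, f y = x ⬝ᵥ y := by
      intro y
      rw [dual_eq_dot f y, dotProduct_comm]
    have hvanish : ∀ y ∈ S, f y = 0 := by
      intro y hy
      have : f y ∈ Submodule.map f S := Submodule.mem_map_of_mem hy
      rw [hf2] at this
      exact this
    refine ⟨x, ?_, ?_⟩
    · intro t' ht'
      rw [← hfx]
      exact hvanish _ (Submodule.subset_span (by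
        simp only [Finset.coe_image, Set.mem_image]
        exact ⟨t', by simpa using ht', rfl⟩))
    · rw [← hfx]
      exact hf1
  -- S is a proper subspace
  have hSne : S ≠ ⊤ := by
    intro h
    have : Module.finrank ℝ S = d := by
      rw [h, finrank_top, Module.finrank_fintype_fun_eq_card, Fintype.card_fin]
    omega
  obtain ⟨w₀, hw₀⟩ : ∃ w₀, w₀ ∉ S := by
    by_contra h
    push_neg at h
    exact hSne (Submodule.eq_top_iff'.mpr h)
  obtain ⟨k₀, hk₀K, hk₀w⟩ := key w₀ hw₀
  have hk₀0 : k₀ ≠ 0 := by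
    intro h
    rw [h, zero_dotProduct] at hk₀w
    exact hk₀w rfl
  obtain ⟨i₀, hi₀⟩ := Function.ne_iff.mp hk₀0
  -- for t ≥ m, e t ∉ S
  have heS : ∀ t : Fin T, m ≤ (t : ℕ) → e t ∉ S := by
    intro t ht
    have htTm : t ∉ Tm := by simp [hTm]; omega
    set s₀ : Finset (Fin T) := insert t Tm with hs₀
    have hcard : s₀.card ≤ n := by
      calc s₀.card ≤ Tm.card + 1 := Finset.card_insert_le t Tm
        _ ≤ m + 1 := by omega
        _ ≤ n := hm1n
    have hli := hKruskal s₀ hcard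
    have hnm := hli.notMem_span_image (s := {y : ↥s₀ | (y : Fin T) ∈ Tm})
      (x := ⟨t, Finset.mem_insert_self t Tm⟩) (by simp [htTm])
    intro hmem
    apply hnm
    refine Submodule.span_mono ?_ hmem
    intro y hy
    simp only [Finset.coe_image, Set.mem_image] at hy
    obtain ⟨t', ht', rfl⟩ := hy
    exact ⟨⟨t', Finset.mem_insert_of_mem (by simpa using ht')⟩, by simpa using ht', rfl⟩
  -- the subspace K of vectors orthogonal to all e t', t' < m
  set K : Submodule ℝ (Fin d → ℝ) := ⨅ t' ∈ Tm, LinearMap.ker (dotL (e t')) with hK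
  have hKmem : ∀ x : Fin d → ℝ, x ∈ K ↔ ∀ t' ∈ Tm, x ⬝ᵥ e t' = 0 := by
    intro x
    simp only [hK, Submodule.mem_iInf, LinearMap.mem_ker]
    rfl
  set φv : Option (Fin T) → (↥K) →ₗ[ℝ] ℝ := fun o =>
    match o with
    | none => (LinearMap.proj i₀).comp K.subtype
    | some t => (dotL (e t)).comp K.subtype
    with hφv
  set sv : Finset (Option (Fin T)) :=
    insert none ((Finset.univ.filter (fun t : Fin T => m ≤ (t : ℕ))).image some) with hsv
  obtain ⟨z, hz⟩ := aux_exists_forall_ne_zero sv φv (by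
    intro i hi
    rcases Finset.mem_insert.mp hi with rfl | hi'
    · refine ⟨⟨k₀, (hKmem k₀).mpr hk₀K⟩, ?_⟩
      simpa [hφv] using hi₀
    · obtain ⟨t, ht, rfl⟩ := Finset.mem_image.mp hi'
      have htm : m ≤ (t : ℕ) := (Finset.mem_filter.mp ht).2
      obtain ⟨x, hxK, hxe⟩ := key (e t) (heS t htm)
      exact ⟨⟨x, (hKmem x).mpr hxK⟩, by simpa [hφv, dotL] using hxe⟩)
  set v : Fin d → ℝ := (z : Fin d → ℝ) with hv
  have hv0 : v ≠ 0 := by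
    intro h
    apply hz none (Finset.mem_insert_self _ _)
    simp only [hφv, LinearMap.comp_apply, LinearMap.proj_apply, Submodule.coe_subtype]
    exact congrFun h i₀
  have hvzero : ∀ t : Fin T, (t : ℕ) < m → v ⬝ᵥ e t = 0 := by
    intro t ht
    exact (hKmem v).mp z.2 t (by simp [hTm, ht])
  have hvne : ∀ t : Fin T, m ≤ (t : ℕ) → v ⬝ᵥ e t ≠ 0 := by
    intro t ht
    have hmem : some t ∈ sv := Finset.mem_insert_of_mem
      (Finset.mem_image.mpr ⟨t, Finset.mem_filter.mpr ⟨Finset.mem_univ _, ht⟩, rfl⟩)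
    have := hz _ hmem
    simpa [hφv, dotL, hv] using this
  -- conclusion
  refine ⟨Matrix.vecMulVec u v, rank_vecMulVec_eq_one hu0 hv0, ?_, ?_⟩
  · intro t ht
    rw [vecMulVec_mulVec_eq, hvzero t ht, zero_smul, Matrix.mulVec_zero]
  · intro t ht i j hij
    rw [vecMulVec_mulVec_eq, Matrix.mulVec_smul]
    simp only [Pi.smul_apply, smul_eq_mul]
    intro h
    exact hudiff t ht i j hij (mul_left_cancel₀ (hvne t ht) h)
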